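/- The Malmquist–Takenaka functions satisfy the differentiation recurrence φ_n'(x) = −n·φ_{n−1}(x) + (2n+1)·i·φ_n(x) + (n+1)·φ_{n+1}(x) for all n ∈ ℤ and x ∈ ℝ. -/

import Mathlib

open Complex

noncomputable def MT (n : ℤ) (x : ℝ) : ℂ :=
  (Real.sqrt (2 / Real.pi) : ℂ) * I ^ n * (1 + 2 * I * x) ^ n / (1 - 2 * I * x) ^ (n + 1)

theorem MT_hasDerivAt (n : ℤ) (x : ℝ) :
    HasDerivAt (MT n)
      (-(n : ℂ) * MT (n - 1) x + (2 * n + 1) * I * MT n x + (n + 1) * MT (n + 1) x) x := by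
  have hu : ∀ y : ℝ, (1 + 2 * I * y : ℂ) ≠ 0 := by
    intro y h
    have h2 := congrArg Complex.re h
    simp [Complex.add_re, Complex.mul_re] at h2
  have hv : ∀ y : ℝ, (1 - 2 * I * y : ℂ) ≠ 0 := by
    intro y h
    have h2 := congrArg Complex.re h
    simp [Complex.sub_re, Complex.mul_re] at h2
  have hid : HasDerivAt (fun y : ℝ => (y : ℂ)) 1 x := by
    simpa using (hasDerivAt_id x).ofReal_comp
  have hud : HasDerivAt (fun y : ℝ => (1 + 2 * I * y : ℂ)) (2 * I) x := by
    simpa using ((hid.const_mul (2 * I)).const_add 1)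
  have hvd : HasDerivAt (fun y : ℝ => (1 - 2 * I * y : ℂ)) (-(2 * I)) x := by
    simpa using ((hid.const_mul (2 * I)).const_sub 1)
  have hUd : HasDerivAt (fun y : ℝ => (1 + 2 * I * y : ℂ) ^ n)
      ((n : ℂ) * (1 + 2 * I * x) ^ (n - 1) * (2 * I)) x :=
    by have h := (hasDerivAt_zpow n _ (Or.inl (hu x))).comp x hud; exact h
  have hVd : HasDerivAt (fun y : ℝ => (1 - 2 * I * y : ℂ) ^ (n + 1))
      (((n : ℂ) + 1) * (1 - 2 * I * x) ^ n * (-(2 * I))) x := by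
    have h := (hasDerivAt_zpow (n + 1) _ (Or.inl (hv x))).comp x hvd
    simp only [neg_mul, mul_neg, Int.cast_add, Int.cast_one, add_sub_cancel_right] at h ⊢
    exact h
  have key := ((hUd.const_mul ((Real.sqrt (2 / Real.pi) : ℂ) * I ^ n)).div hVd
    (zpow_ne_zero _ (hv x)))
  convert key using 1
  · rfl
  · rfl
  simp only [MT]
  rw [show (n - 1 + 1 : ℤ) = n by ring, show (n + 1 + 1 : ℤ) = n + 1 + 1 from rfl]
  rw [zpow_sub_one₀ (hu x), zpow_sub_one₀ I_ne_zero, zpow_add_one₀ (hu x),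
    zpow_add_one₀ I_ne_zero, zpow_add_one₀ (hv x) (n + 1), zpow_add_one₀ (hv x) n]
  set c : ℂ := (Real.sqrt (2 / Real.pi) : ℂ) with hc
  set u : ℂ := 1 + 2 * I * x with huu
  set v : ℂ := 1 - 2 * I * x with hvv
  set J : ℂ := I ^ n with hJ
  have h1 : u ≠ 0 := hu x
  have h2 : v ≠ 0 := hv x
  have h3 : u ^ n ≠ 0 := zpow_ne_zero _ h1
  have h4 : v ^ n ≠ 0 := zpow_ne_zero _ h2
  have huv : v = 2 - u := by rw [huu, hvv]; ring
  field_simp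
  rw [huv]; linear_combination c * J * (4 * u * (n : ℂ) - u ^ 2 * (n : ℂ) - 4 * (n : ℂ)) * I_sq
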